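/- For n ≥ 2 and 1 ≤ i ≤ n−1, the divided difference operators ∂_i on ℤ[x_1,…,x_n] satisfy: (a) ∂_i ∘ ∂_j = ∂_j ∘ ∂_i whenever |i − j| > 1; (b) ∂_i ∘ ∂_{i+1} ∘ ∂_i = ∂_{i+1} ∘ ∂_i ∘ ∂_{i+1} whenever 1 ≤ i ≤ n−2; (c) ∂_i ∘ ∂_i = 0. -/

import Mathlib

open MvPolynomial

variable {n : ℕ}

lemma swap_swap_rename (a b : Fin n) (P : MvPolynomial (Fin n) ℤ) :
    rename (Equiv.swap a b) (rename (Equiv.swap a b) P) = P := by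
  rw [rename_rename]
  have h : ⇑(Equiv.swap a b) ∘ ⇑(Equiv.swap a b) = id := by
    funext x; simp [Equiv.swap_apply_self]
  rw [h, rename_id, AlgHom.id_apply]

lemma Xsub_ne (a b : Fin n) (hab : a ≠ b) :
    (X a - X b : MvPolynomial (Fin n) ℤ) ≠ 0 :=
  sub_ne_zero.mpr (fun h => hab (X_injective h))

lemma sym_of_ddiff (a b : Fin n) (hab : a ≠ b) (P A : MvPolynomial (Fin n) ℤ)
    (h1 : (X a - X b) * A = P - rename (Equiv.swap a b) P) :
    rename (Equiv.swap a b) A = A := by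
  have h2 := congrArg (rename (Equiv.swap a b)) h1
  simp only [map_mul, map_sub, rename_X, Equiv.swap_apply_left, Equiv.swap_apply_right,
    swap_swap_rename] at h2
  have h3 : (X a - X b : MvPolynomial (Fin n) ℤ) * (rename (Equiv.swap a b) A - A) = 0 := by
    linear_combination -h2 - h1
  rcases mul_eq_zero.mp h3 with h | h
  · exact absurd h (Xsub_ne a b hab)
  · exact sub_eq_zero.mp h

lemma ddiff_sq (a b : Fin n) (hab : a ≠ b) (P A B : MvPolynomial (Fin n) ℤ)
    (h1 : (X a - X b) * A = P - rename (Equiv.swap a b) P)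
    (h2 : (X a - X b) * B = A - rename (Equiv.swap a b) A) : B = 0 := by
  rw [sym_of_ddiff a b hab P A h1, sub_self] at h2
  rcases mul_eq_zero.mp h2 with h | h
  · exact absurd h (Xsub_ne a b hab)
  · exact h

lemma swap_rename_comm (a b c d : Fin n)
    (hac : a ≠ c) (had : a ≠ d) (hbc : b ≠ c) (hbd : b ≠ d) (P : MvPolynomial (Fin n) ℤ) :
    rename (Equiv.swap a b) (rename (Equiv.swap c d) P)
      = rename (Equiv.swap c d) (rename (Equiv.swap a b) P) := by
  rw [rename_rename, rename_rename]
  have hfun : ⇑(Equiv.swap a b) ∘ ⇑(Equiv.swap c d) = ⇑(Equiv.swap c d) ∘ ⇑(Equiv.swap a b) := by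
    have s1 : Equiv.swap c d a = a := Equiv.swap_apply_of_ne_of_ne hac had
    have s2 : Equiv.swap c d b = b := Equiv.swap_apply_of_ne_of_ne hbc hbd
    have s3 : Equiv.swap a b c = c := Equiv.swap_apply_of_ne_of_ne hac.symm hbc.symm
    have s4 : Equiv.swap a b d = d := Equiv.swap_apply_of_ne_of_ne had.symm hbd.symm
    funext x
    simp only [Function.comp_apply]
    rcases eq_or_ne x a with rfl | hxa
    · simp [Equiv.swap_apply_left, s1, s2]
    rcases eq_or_ne x b with rfl | hxb
    · simp [Equiv.swap_apply_right, s1, s2]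
    rcases eq_or_ne x c with rfl | hxc
    · simp [Equiv.swap_apply_left, s3, s4]
    rcases eq_or_ne x d with rfl | hxd
    · simp [Equiv.swap_apply_right, s3, s4]
    simp [Equiv.swap_apply_of_ne_of_ne hxa hxb, Equiv.swap_apply_of_ne_of_ne hxc hxd]
  rw [hfun]

lemma ddiff_comm (a b c d : Fin n) (hab : a ≠ b) (hcd : c ≠ d)
    (hac : a ≠ c) (had : a ≠ d) (hbc : b ≠ c) (hbd : b ≠ d)
    (P A B A' B' : MvPolynomial (Fin n) ℤ)
    (h1 : (X c - X d) * A = P - rename (Equiv.swap c d) P)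
    (h2 : (X a - X b) * B = A - rename (Equiv.swap a b) A)
    (h3 : (X a - X b) * A' = P - rename (Equiv.swap a b) P)
    (h4 : (X c - X d) * B' = A' - rename (Equiv.swap c d) A') : B = B' := by
  have e1 := congrArg (rename (Equiv.swap a b)) h1
  have e3 := congrArg (rename (Equiv.swap c d)) h3
  simp only [map_mul, map_sub, rename_X,
    Equiv.swap_apply_of_ne_of_ne hac.symm hbc.symm,
    Equiv.swap_apply_of_ne_of_ne had.symm hbd.symm,
    Equiv.swap_apply_of_ne_of_ne hac had,
    Equiv.swap_apply_of_ne_of_ne hbc hbd] at e1 e3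
  have hcomm := swap_rename_comm a b c d hac had hbc hbd P
  have key : ((X a - X b) * (X c - X d)) * B = ((X a - X b) * (X c - X d)) * B' := by
    linear_combination (X c - X d) * h2 - (X a - X b) * h4 + h1 - e1 - h3 + e3 + hcomm
  exact mul_left_cancel₀ (mul_ne_zero (Xsub_ne a b hab) (Xsub_ne c d hcd)) key

lemma swap_braid (a b c : Fin n) (hab : a ≠ b) (hbc : b ≠ c) (hac : a ≠ c)
    (P : MvPolynomial (Fin n) ℤ) :
    rename (Equiv.swap a b) (rename (Equiv.swap b c) (rename (Equiv.swap a b) P))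
      = rename (Equiv.swap b c) (rename (Equiv.swap a b) (rename (Equiv.swap b c) P)) := by
  rw [rename_rename, rename_rename, rename_rename, rename_rename]
  have hfun : (⇑(Equiv.swap a b) ∘ ⇑(Equiv.swap b c)) ∘ ⇑(Equiv.swap a b)
      = (⇑(Equiv.swap b c) ∘ ⇑(Equiv.swap a b)) ∘ ⇑(Equiv.swap b c) := by
    have s1 : Equiv.swap a b c = c := Equiv.swap_apply_of_ne_of_ne hac.symm hbc.symm
    have s2 : Equiv.swap b c a = a := Equiv.swap_apply_of_ne_of_ne hab hac
    funext x
    simp only [Function.comp_apply]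
    rcases eq_or_ne x a with rfl | hxa
    · simp [Equiv.swap_apply_left, Equiv.swap_apply_right, s1, s2]
    rcases eq_or_ne x b with rfl | hxb
    · simp [Equiv.swap_apply_left, Equiv.swap_apply_right, s1, s2]
    rcases eq_or_ne x c with rfl | hxc
    · simp [Equiv.swap_apply_left, Equiv.swap_apply_right, s1, s2]
    simp [Equiv.swap_apply_of_ne_of_ne hxa hxb, Equiv.swap_apply_of_ne_of_ne hxb hxc]
  rw [hfun]

lemma ddiff_braid (a b c : Fin n) (hab : a ≠ b) (hbc : b ≠ c) (hac : a ≠ c)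
    (P C₁ C₂ C₃ D₁ D₂ D₃ : MvPolynomial (Fin n) ℤ)
    (h1 : (X a - X b) * C₁ = P - rename (Equiv.swap a b) P)
    (h2 : (X b - X c) * C₂ = C₁ - rename (Equiv.swap b c) C₁)
    (h3 : (X a - X b) * C₃ = C₂ - rename (Equiv.swap a b) C₂)
    (h4 : (X b - X c) * D₁ = P - rename (Equiv.swap b c) P)
    (h5 : (X a - X b) * D₂ = D₁ - rename (Equiv.swap a b) D₁)
    (h6 : (X b - X c) * D₃ = D₂ - rename (Equiv.swap b c) D₂) : C₃ = D₃ := by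
  have u_ne := Xsub_ne a b hab
  have v_ne := Xsub_ne b c hbc
  have w_ne := Xsub_ne a c hac
  have hC1 := sym_of_ddiff a b hab P C₁ h1
  have hD1 := sym_of_ddiff b c hbc P D₁ h4
  -- e2 : w * s1 C₂ = C₁ - s1 s2 C₁
  have e2 := congrArg (rename (Equiv.swap a b)) h2
  simp only [map_mul, map_sub, rename_X, Equiv.swap_apply_left, Equiv.swap_apply_right,
    Equiv.swap_apply_of_ne_of_ne hac.symm hbc.symm, hC1] at e2
  -- e1s2 : w * s2 C₁ = s2 P - s2 s1 P
  have e1s2 := congrArg (rename (Equiv.swap b c)) h1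
  simp only [map_mul, map_sub, rename_X, Equiv.swap_apply_left, Equiv.swap_apply_right,
    Equiv.swap_apply_of_ne_of_ne hab hac] at e1s2
  -- e1s1s2 : v * s1 s2 C₁ = s1 s2 P - s1 s2 s1 P
  have e1s1s2 := congrArg (rename (Equiv.swap a b)) e1s2
  simp only [map_mul, map_sub, rename_X, Equiv.swap_apply_left, Equiv.swap_apply_right,
    Equiv.swap_apply_of_ne_of_ne hac.symm hbc.symm] at e1s1s2
  -- e5 : w * s2 D₂ = D₁ - s2 s1 D₁
  have e5 := congrArg (rename (Equiv.swap b c)) h5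
  simp only [map_mul, map_sub, rename_X, Equiv.swap_apply_left, Equiv.swap_apply_right,
    Equiv.swap_apply_of_ne_of_ne hab hac, hD1] at e5
  -- e4s1 : w * s1 D₁ = s1 P - s1 s2 P
  have e4s1 := congrArg (rename (Equiv.swap a b)) h4
  simp only [map_mul, map_sub, rename_X, Equiv.swap_apply_left, Equiv.swap_apply_right,
    Equiv.swap_apply_of_ne_of_ne hac.symm hbc.symm] at e4s1
  -- e4s2s1 : u * s2 s1 D₁ = s2 s1 P - s2 s1 s2 P
  have e4s2s1 := congrArg (rename (Equiv.swap b c)) e4s1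
  simp only [map_mul, map_sub, rename_X, Equiv.swap_apply_left, Equiv.swap_apply_right,
    Equiv.swap_apply_of_ne_of_ne hab hac] at e4s2s1
  set s1P := rename (Equiv.swap a b) P
  set s2P := rename (Equiv.swap b c) P
  have claim1 : (X a - X b) * (((X a - X b) * (X b - X c) * (X a - X c)) * C₃)
      = (X a - X b) * (P - rename (Equiv.swap a b) P - rename (Equiv.swap b c) P
        + rename (Equiv.swap b c) (rename (Equiv.swap a b) P)
        + rename (Equiv.swap a b) (rename (Equiv.swap b c) P)
        - rename (Equiv.swap a b) (rename (Equiv.swap b c) (rename (Equiv.swap a b) P))) := by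
    linear_combination ((X a - X b) * (X b - X c) * (X a - X c)) * h3
      + ((X a - X b) * (X a - X c)) * h2 - ((X a - X b) * (X b - X c)) * e2
      + (X a - X b) * h1 - (X a - X b) * e1s2 + (X a - X b) * e1s1s2
  have claim2 : (X b - X c) * (((X a - X b) * (X b - X c) * (X a - X c)) * D₃)
      = (X b - X c) * (P - rename (Equiv.swap a b) P - rename (Equiv.swap b c) P
        + rename (Equiv.swap b c) (rename (Equiv.swap a b) P)
        + rename (Equiv.swap a b) (rename (Equiv.swap b c) P)
        - rename (Equiv.swap b c) (rename (Equiv.swap a b) (rename (Equiv.swap b c) P))) := by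
    linear_combination ((X b - X c) * (X a - X b) * (X a - X c)) * h6
      + ((X b - X c) * (X a - X c)) * h5 - ((X b - X c) * (X a - X b)) * e5
      + (X b - X c) * h4 - (X b - X c) * e4s1 + (X b - X c) * e4s2s1
  have hC := mul_left_cancel₀ u_ne claim1
  have hD := mul_left_cancel₀ v_ne claim2
  have hbr := swap_braid a b c hab hbc hac P
  have key : ((X a - X b) * (X b - X c) * (X a - X c)) * C₃
      = ((X a - X b) * (X b - X c) * (X a - X c)) * D₃ := by
    linear_combination hC - hD - hbr
  exact mul_left_cancel₀ (mul_ne_zero (mul_ne_zero u_ne v_ne) w_ne) key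

/-- `s_i(P)`: the polynomial obtained from `P` by exchanging the variables `x_i` and
`x_{i+1}` (0-based: exchanges `X ⟨i⟩` and `X ⟨i+1⟩`, i.e. the 1-based variables
`x_{i+1}, x_{i+2}`). -/
noncomputable def swapVars (n i : ℕ) (h : i + 1 < n) (P : MvPolynomial (Fin n) ℤ) :
    MvPolynomial (Fin n) ℤ :=
  rename (Equiv.swap ⟨i, by omega⟩ ⟨i + 1, h⟩) P

/-- `IsDDiff n i h P D` says that `D` is the divided difference `∂_i(P)`, i.e.
`(x_i - x_{i+1}) · D = P - s_i(P)` (the quotient is unique since `ℤ[x]` is a domain). -/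
def IsDDiff (n i : ℕ) (h : i + 1 < n) (P D : MvPolynomial (Fin n) ℤ) : Prop :=
  (X (⟨i, by omega⟩ : Fin n) - X ⟨i + 1, h⟩) * D = P - swapVars n i h P

/-- Relations for divided difference operators on `ℤ[x_1, …, x_n]`:
(a) `∂_i ∘ ∂_j = ∂_j ∘ ∂_i` for `|i - j| > 1`;
(b) `∂_i ∘ ∂_{i+1} ∘ ∂_i = ∂_{i+1} ∘ ∂_i ∘ ∂_{i+1}`;
(c) `∂_i ∘ ∂_i = 0`.
Each `∂` is encoded by its defining relation `IsDDiff`. -/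
theorem ddiff_relations (n : ℕ) (hn : 2 ≤ n) :
    -- (a) commutation: ∂_i (∂_j P) = ∂_j (∂_i P) when |i - j| > 1
    (∀ (i j : ℕ) (hi : i + 1 < n) (hj : j + 1 < n), (i + 1 < j ∨ j + 1 < i) →
      ∀ P A B A' B' : MvPolynomial (Fin n) ℤ,
        IsDDiff n j hj P A → IsDDiff n i hi A B →
        IsDDiff n i hi P A' → IsDDiff n j hj A' B' → B = B') ∧
    -- (b) braid: ∂_i (∂_{i+1} (∂_i P)) = ∂_{i+1} (∂_i (∂_{i+1} P))
    (∀ (i : ℕ) (hi : i + 2 < n),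
      ∀ P C₁ C₂ C₃ D₁ D₂ D₃ : MvPolynomial (Fin n) ℤ,
        IsDDiff n i (by omega) P C₁ → IsDDiff n (i + 1) hi C₁ C₂ →
          IsDDiff n i (by omega) C₂ C₃ →
        IsDDiff n (i + 1) hi P D₁ → IsDDiff n i (by omega) D₁ D₂ →
          IsDDiff n (i + 1) hi D₂ D₃ →
        C₃ = D₃) ∧
    -- (c) ∂_i (∂_i P) = 0
    (∀ (i : ℕ) (hi : i + 1 < n), ∀ P A B : MvPolynomial (Fin n) ℤ,
      IsDDiff n i hi P A → IsDDiff n i hi A B → B = 0) := by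
  refine ⟨?_, ?_, ?_⟩
  · intro i j hi hj hij P A B A' B' h1 h2 h3 h4
    simp only [IsDDiff, swapVars] at h1 h2 h3 h4
    exact ddiff_comm ⟨i, by omega⟩ ⟨i + 1, hi⟩ ⟨j, by omega⟩ ⟨j + 1, hj⟩
      ((by simp only [ne_eq, Fin.mk.injEq]; omega)) ((by simp only [ne_eq, Fin.mk.injEq]; omega))
      ((by simp only [ne_eq, Fin.mk.injEq]; omega)) ((by simp only [ne_eq, Fin.mk.injEq]; omega))
      ((by simp only [ne_eq, Fin.mk.injEq]; omega)) ((by simp only [ne_eq, Fin.mk.injEq]; omega))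
      P A B A' B' h1 h2 h3 h4
  · intro i hi P C₁ C₂ C₃ D₁ D₂ D₃ h1 h2 h3 h4 h5 h6
    simp only [IsDDiff, swapVars] at h1 h2 h3 h4 h5 h6
    exact ddiff_braid ⟨i, by omega⟩ ⟨i + 1, by omega⟩ ⟨i + 2, hi⟩
      ((by simp only [ne_eq, Fin.mk.injEq]; omega)) ((by simp only [ne_eq, Fin.mk.injEq]; omega)) ((by simp only [ne_eq, Fin.mk.injEq]; omega))
      P C₁ C₂ C₃ D₁ D₂ D₃ h1 h2 h3 h4 h5 h6
  · intro i hi P A B h1 h2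
    simp only [IsDDiff, swapVars] at h1 h2
    exact ddiff_sq ⟨i, by omega⟩ ⟨i + 1, hi⟩ ((by simp only [ne_eq, Fin.mk.injEq]; omega)) P A B h1 h2
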